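/- Let Ω be a bounded open subset of ℝ^d, let g ∈ C_b(Ω) be nonnegative with ∫_Ω g(x) dx = 1, let I ∈ C_b([0,∞)×Ω), and let F : ℝ → ℝ be bounded by M > 0 and Lipschitz with constant L > 0. For w ∈ C_b([0,∞)×Ω×Ω) define the operator T_w on C_b([0,∞)×Ω) by T_w[S](t,x) := ∫_Ω w(t,x,y)·g(y)·F(S(t,y)) dy + I(t,x). If ‖w‖_∞·L < 1 then T_w has a unique fixed point S̄[w] ∈ C_b([0,∞)×Ω). Moreover, for any w₁, w₂ ∈ C_b([0,∞)×Ω×Ω) with ‖w₁‖_∞·L < 1 and ‖w₂‖_∞·L < 1, ‖S̄[w₁] − S̄[w₂]‖_∞ ≤ (M/(1 − ‖w₂‖_∞·L))·‖w₁ − w₂‖_∞. -/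

import Mathlib

open MeasureTheory Set Real Filter BoundedContinuousFunction

/-- Continuous bounded real-valued function on a set. -/
def CbOn {X : Type*} [TopologicalSpace X] (Om : Set X) (f : X → ℝ) : Prop :=
  ContinuousOn f Om ∧ ∃ C : ℝ, ∀ x ∈ Om, |f x| ≤ C

/-- Continuous bounded function on `[0,∞) × Ω`. -/
def CbTimeOn {X : Type*} [TopologicalSpace X] (Om : Set X) (f : ℝ → X → ℝ) : Prop :=
  ContinuousOn (fun q : ℝ × X => f q.1 q.2) (Set.Ici 0 ×ˢ Om) ∧
  ∃ C : ℝ, ∀ t ≥ (0:ℝ), ∀ x ∈ Om, |f t x| ≤ C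

/-- Continuous bounded function on `[0,∞) × Ω × Ω`. -/
def CbTimeOn2 {X : Type*} [TopologicalSpace X] (Om : Set X) (w : ℝ → X → X → ℝ) : Prop :=
  ContinuousOn (fun q : ℝ × X × X => w q.1 q.2.1 q.2.2) (Set.Ici 0 ×ˢ Om ×ˢ Om) ∧
  ∃ C : ℝ, ∀ t ≥ (0:ℝ), ∀ x ∈ Om, ∀ y ∈ Om, |w t x y| ≤ C

section Helpers

variable {d : ℕ} {Om : Set (Fin d → ℝ)}

lemma aux_finMeas (hOm_open : IsOpen Om) (hOm_bdd : Bornology.IsBounded Om) :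
    IsFiniteMeasure (volume.restrict Om) :=
  ⟨by rw [Measure.restrict_apply_univ]; exact hOm_bdd.measure_lt_top⟩

lemma aux_integrableOn (hOm_open : IsOpen Om) (hOm_bdd : Bornology.IsBounded Om)
    {f : (Fin d → ℝ) → ℝ} (hf : ContinuousOn f Om)
    {C : ℝ} (hC : ∀ y ∈ Om, |f y| ≤ C) : IntegrableOn f Om := by
  have := aux_finMeas hOm_open hOm_bdd
  refine ⟨hf.aestronglyMeasurable hOm_open.measurableSet, HasFiniteIntegral.of_bounded (C := C) ?_⟩
  exact (ae_restrict_iff' hOm_open.measurableSet).2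
    (Filter.Eventually.of_forall fun y hy => by simpa [Real.norm_eq_abs] using hC y hy)

lemma aux_abs_setIntegral_le (hOm_open : IsOpen Om)
    {g : (Fin d → ℝ) → ℝ} (hg_int : IntegrableOn g Om) (hg_mass : (∫ x in Om, g x) = 1)
    {f : (Fin d → ℝ) → ℝ} {c : ℝ} (hb : ∀ y ∈ Om, |f y| ≤ c * g y) :
    |∫ y in Om, f y| ≤ c := by
  have h1 : ‖∫ y in Om, f y‖ ≤ ∫ y in Om, c * g y := by
    refine norm_integral_le_of_norm_le (hg_int.const_mul c) ?_
    exact (ae_restrict_iff' hOm_open.measurableSet).2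
      (Filter.Eventually.of_forall fun y hy => by simpa [Real.norm_eq_abs] using hb y hy)
  rwa [integral_const_mul, hg_mass, mul_one, Real.norm_eq_abs] at h1

lemma aux_sliceS {h : ℝ → (Fin d → ℝ) → ℝ}
    (hc : ContinuousOn (fun q : ℝ × (Fin d → ℝ) => h q.1 q.2) (Set.Ici 0 ×ˢ Om))
    {t : ℝ} (ht : 0 ≤ t) : ContinuousOn (fun y => h t y) Om := by
  have hm : ContinuousOn (fun y : Fin d → ℝ => ((t, y) : ℝ × (Fin d → ℝ))) Om :=
    (continuous_const.prodMk continuous_id).continuousOn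
  exact hc.comp hm fun y hy => ⟨ht, hy⟩

lemma aux_sliceW {w : ℝ → (Fin d → ℝ) → (Fin d → ℝ) → ℝ}
    (hc : ContinuousOn (fun q : ℝ × (Fin d → ℝ) × (Fin d → ℝ) => w q.1 q.2.1 q.2.2)
      (Set.Ici 0 ×ˢ Om ×ˢ Om))
    {t : ℝ} (ht : 0 ≤ t) {x : Fin d → ℝ} (hx : x ∈ Om) :
    ContinuousOn (fun y => w t x y) Om := by
  have hm : ContinuousOn (fun y : Fin d → ℝ => ((t, x, y) : ℝ × (Fin d → ℝ) × (Fin d → ℝ))) Om :=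
    (continuous_const.prodMk (continuous_const.prodMk continuous_id)).continuousOn
  exact hc.comp hm fun y hy => ⟨ht, hx, hy⟩

lemma aux_int3 (hOm_open : IsOpen Om) (hOm_bdd : Bornology.IsBounded Om)
    {a b c : (Fin d → ℝ) → ℝ} (ha : ContinuousOn a Om) (hb : ContinuousOn b Om)
    (hc : ContinuousOn c Om) {A B C : ℝ}
    (hA : ∀ y ∈ Om, |a y| ≤ A) (hB : ∀ y ∈ Om, |b y| ≤ B) (hC : ∀ y ∈ Om, |c y| ≤ C) :
    IntegrableOn (fun y => a y * (b y * c y)) Om := by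
  refine aux_integrableOn hOm_open hOm_bdd (ha.mul (hb.mul hc)) (C := A * (B * C)) ?_
  intro y hy
  have h1 := hA y hy; have h2 := hB y hy; have h3 := hC y hy
  have n1 := abs_nonneg (a y); have n2 := abs_nonneg (b y); have n3 := abs_nonneg (c y)
  rw [abs_mul, abs_mul]
  exact mul_le_mul h1 (mul_le_mul h2 h3 n3 (n2.trans h2)) (mul_nonneg n2 n3) (n1.trans h1)

end Helpers

open Classical in
noncomputable def extFn {d : ℕ} (Om : Set (Fin d → ℝ))
    (S : (↥(Set.Ici (0:ℝ) ×ˢ Om)) →ᵇ ℝ) (t : ℝ) (x : Fin d → ℝ) : ℝ :=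
  if h : (t, x) ∈ Set.Ici (0:ℝ) ×ˢ Om then S ⟨(t, x), h⟩ else 0

lemma extFn_eq {d : ℕ} {Om : Set (Fin d → ℝ)} (S : (↥(Set.Ici (0:ℝ) ×ˢ Om)) →ᵇ ℝ)
    {t : ℝ} {x : Fin d → ℝ} (h : (t, x) ∈ Set.Ici (0:ℝ) ×ˢ Om) :
    extFn Om S t x = S ⟨(t, x), h⟩ := by unfold extFn; rw [dif_pos h]

lemma extFn_contOn {d : ℕ} {Om : Set (Fin d → ℝ)} (S : (↥(Set.Ici (0:ℝ) ×ˢ Om)) →ᵇ ℝ) :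
    ContinuousOn (fun q : ℝ × (Fin d → ℝ) => extFn Om S q.1 q.2) (Set.Ici (0:ℝ) ×ˢ Om) := by
  rw [continuousOn_iff_continuous_restrict]
  have : (Set.Ici (0:ℝ) ×ˢ Om).restrict (fun q : ℝ × (Fin d → ℝ) => extFn Om S q.1 q.2)
      = fun p => S p := by
    funext p
    have hp : ((p : ℝ × (Fin d → ℝ)).1, (p : ℝ × (Fin d → ℝ)).2) ∈ Set.Ici (0:ℝ) ×ˢ Om := p.2
    exact extFn_eq S hp
  refine (congrArg Continuous this).mpr ?_
  exact S.continuous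

theorem part1
    (d : ℕ) (Om : Set (Fin d → ℝ)) (hOm_open : IsOpen Om) (hOm_bdd : Bornology.IsBounded Om)
    (g : (Fin d → ℝ) → ℝ)
    (hg_cont : ContinuousOn g Om) (hg_nonneg : ∀ x ∈ Om, 0 ≤ g x)
    (hg_bdd : ∃ C : ℝ, ∀ x ∈ Om, g x ≤ C) (hg_mass : (∫ x in Om, g x) = 1)
    (I : ℝ → (Fin d → ℝ) → ℝ) (hI : CbTimeOn Om I)
    (F : ℝ → ℝ) (M L : ℝ) (hM : 0 < M) (hL : 0 < L)
    (hF_bdd : ∀ u : ℝ, |F u| ≤ M) (hF_lip : LipschitzWith L.toNNReal F)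
    (w : ℝ → (Fin d → ℝ) → (Fin d → ℝ) → ℝ) (wbd : ℝ)
    (hw : CbTimeOn2 Om w) (hwbd : ∀ t ≥ (0:ℝ), ∀ x ∈ Om, ∀ y ∈ Om, |w t x y| ≤ wbd)
    (hwL : wbd * L < 1) :
    ∃ Sb : ℝ → (Fin d → ℝ) → ℝ, CbTimeOn Om Sb ∧
      (∀ t ≥ (0:ℝ), ∀ x ∈ Om,
        Sb t x = (∫ y in Om, w t x y * (g y * F (Sb t y))) + I t x) ∧
      (∀ Sb' : ℝ → (Fin d → ℝ) → ℝ, CbTimeOn Om Sb' →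
        (∀ t ≥ (0:ℝ), ∀ x ∈ Om,
          Sb' t x = (∫ y in Om, w t x y * (g y * F (Sb' t y))) + I t x) →
        ∀ t ≥ (0:ℝ), ∀ x ∈ Om, Sb' t x = Sb t x) := by
  classical
  obtain ⟨hw_cont, -⟩ := hw
  obtain ⟨hI_cont, CI, hI_bdd⟩ := hI
  obtain ⟨Cg, hCg⟩ := hg_bdd
  have hF_cont : Continuous F := hF_lip.continuous
  have hOm_ne : Om.Nonempty := by
    by_contra h
    rw [Set.not_nonempty_iff_eq_empty] at h
    rw [h] at hg_mass
    simp at hg_mass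
  obtain ⟨x₀, hx₀⟩ := hOm_ne
  have hwbd0 : 0 ≤ wbd := le_trans (abs_nonneg _) (hwbd 0 le_rfl x₀ hx₀ x₀ hx₀)
  have hg_abs : ∀ y ∈ Om, |g y| ≤ Cg := fun y hy => by
    rw [abs_of_nonneg (hg_nonneg y hy)]; exact hCg y hy
  have hg_int : IntegrableOn g Om := aux_integrableOn hOm_open hOm_bdd hg_cont hg_abs
  set P : Set (ℝ × (Fin d → ℝ)) := Set.Ici (0:ℝ) ×ˢ Om with hP
  -- pointwise bound on the integrand
  have hPt : ∀ (S : ↥P →ᵇ ℝ) (t : ℝ), 0 ≤ t → ∀ x ∈ Om, ∀ y ∈ Om,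
      |w t x y * (g y * F (extFn Om S t y))| ≤ (wbd * M) * g y := by
    intro S t ht x hx y hy
    have h1 := hwbd t ht x hx y hy
    have h2 := hF_bdd (extFn Om S t y)
    have h3 := hg_nonneg y hy
    have n1 := abs_nonneg (w t x y); have n2 := abs_nonneg (F (extFn Om S t y))
    rw [abs_mul, abs_mul, abs_of_nonneg h3]
    calc |w t x y| * (g y * |F (extFn Om S t y)|)
        ≤ wbd * (g y * M) :=
          mul_le_mul h1 (mul_le_mul_of_nonneg_left h2 h3) (mul_nonneg h3 n2) hwbd0
      _ = (wbd * M) * g y := by ring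
  -- integrability of the integrand
  have hIntS : ∀ (S : ↥P →ᵇ ℝ) (t : ℝ), 0 ≤ t → ∀ x ∈ Om,
      IntegrableOn (fun y => w t x y * (g y * F (extFn Om S t y))) Om := by
    intro S t ht x hx
    exact aux_int3 hOm_open hOm_bdd (aux_sliceW hw_cont ht hx) hg_cont
      (hF_cont.comp_continuousOn (aux_sliceS (extFn_contOn S) ht))
      (fun y hy => hwbd t ht x hx y hy) hg_abs (fun y _ => hF_bdd _)
  -- the operator on plain functions
  set Tfun : (↥P →ᵇ ℝ) → ℝ → (Fin d → ℝ) → ℝ :=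
    fun S t x => (∫ y in Om, w t x y * (g y * F (extFn Om S t y))) + I t x with hTfun
  -- continuity of Tfun S on P
  have hTcont : ∀ S : ↥P →ᵇ ℝ,
      ContinuousOn (fun q : ℝ × (Fin d → ℝ) => Tfun S q.1 q.2) P := by
    intro S
    refine ContinuousOn.add ?_ hI_cont
    intro q₀ hq₀
    refine continuousWithinAt_of_dominated
      (bound := fun y => (wbd * M) * g y) ?_ ?_ (hg_int.const_mul _) ?_
    · refine eventually_nhdsWithin_of_forall (fun q hq => ?_)
      exact ((aux_sliceW hw_cont hq.1 hq.2).mul (hg_cont.mul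
        (hF_cont.comp_continuousOn (aux_sliceS (extFn_contOn S) hq.1)))).aestronglyMeasurable
        hOm_open.measurableSet
    · refine eventually_nhdsWithin_of_forall (fun q hq => ?_)
      refine (ae_restrict_iff' hOm_open.measurableSet).2
        (Filter.Eventually.of_forall fun y hy => ?_)
      rw [Real.norm_eq_abs]
      exact hPt S q.1 hq.1 q.2 hq.2 y hy
    · refine (ae_restrict_iff' hOm_open.measurableSet).2
        (Filter.Eventually.of_forall fun y hy => ?_)
      have hw1 : ContinuousWithinAt (fun q : ℝ × (Fin d → ℝ) => w q.1 q.2 y) P q₀ := by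
        refine (hw_cont.comp
          ((continuous_fst.prodMk (continuous_snd.prodMk continuous_const)).continuousOn)
          (fun q hq => ⟨hq.1, hq.2, hy⟩)) q₀ hq₀
      have hS1 : ContinuousWithinAt (fun q : ℝ × (Fin d → ℝ) => extFn Om S q.1 y) P q₀ := by
        refine ((extFn_contOn S).comp
          ((continuous_fst.prodMk continuous_const).continuousOn)
          (fun q hq => ⟨hq.1, hy⟩)) q₀ hq₀
      exact hw1.mul (continuousWithinAt_const.mul
        (hF_cont.continuousAt.comp_continuousWithinAt hS1))
  -- boundedness of Tfun S on P
  have hTbdd : ∀ (S : ↥P →ᵇ ℝ) (p : ↥P), ‖Tfun S (p : ℝ × (Fin d → ℝ)).1 (p : ℝ × (Fin d → ℝ)).2‖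
      ≤ wbd * M + CI := by
    intro S p
    obtain ⟨ht, hx⟩ := p.2
    rw [Real.norm_eq_abs]
    refine le_trans (abs_add_le _ _) (add_le_add ?_ (hI_bdd _ ht _ hx))
    exact aux_abs_setIntegral_le hOm_open hg_int hg_mass
      (fun y hy => hPt S _ ht _ hx y hy)
  -- the operator on bounded continuous functions
  have hT : ∀ S : ↥P →ᵇ ℝ, ∃ TS : ↥P →ᵇ ℝ, ∀ p : ↥P,
      TS p = Tfun S (p : ℝ × (Fin d → ℝ)).1 (p : ℝ × (Fin d → ℝ)).2 := by
    intro S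
    refine ⟨BoundedContinuousFunction.ofNormedAddCommGroup
      (fun p : ↥P => Tfun S (p : ℝ × (Fin d → ℝ)).1 (p : ℝ × (Fin d → ℝ)).2)
      ?_ (wbd * M + CI) (hTbdd S), fun p => rfl⟩
    exact continuousOn_iff_continuous_restrict.mp (hTcont S)
  set T : (↥P →ᵇ ℝ) → (↥P →ᵇ ℝ) := fun S => (hT S).choose with hTdef
  have hTspec : ∀ (S : ↥P →ᵇ ℝ) (p : ↥P),
      T S p = Tfun S (p : ℝ × (Fin d → ℝ)).1 (p : ℝ × (Fin d → ℝ)).2 :=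
    fun S => (hT S).choose_spec
  -- Lipschitz estimate for F
  have hLip : ∀ a b : ℝ, |F a - F b| ≤ L * |a - b| := by
    intro a b
    have h := hF_lip.dist_le_mul a b
    rwa [Real.dist_eq, Real.dist_eq, Real.coe_toNNReal _ hL.le] at h
  -- contraction estimate
  have hdist : ∀ S₁ S₂ : ↥P →ᵇ ℝ, ∀ p : ↥P,
      dist (T S₁ p) (T S₂ p) ≤ (wbd * L) * dist S₁ S₂ := by
    intro S₁ S₂ p
    obtain ⟨ht, hx⟩ := p.2
    rw [hTspec, hTspec, Real.dist_eq]
    simp only [hTfun]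
    rw [add_sub_add_right_eq_sub,
      ← integral_sub (hIntS S₁ _ ht _ hx) (hIntS S₂ _ ht _ hx)]
    refine aux_abs_setIntegral_le hOm_open hg_int hg_mass (fun y hy => ?_)
    set t := (p : ℝ × (Fin d → ℝ)).1
    set x := (p : ℝ × (Fin d → ℝ)).2
    have hg0 := hg_nonneg y hy
    have hyP : ((t, y) : ℝ × (Fin d → ℝ)) ∈ P := ⟨ht, hy⟩
    have hee : |extFn Om S₁ t y - extFn Om S₂ t y| ≤ dist S₁ S₂ := by
      rw [extFn_eq S₁ hyP, extFn_eq S₂ hyP, ← Real.dist_eq]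
      exact BoundedContinuousFunction.dist_coe_le_dist _
    have hFe : |F (extFn Om S₁ t y) - F (extFn Om S₂ t y)| ≤ L * dist S₁ S₂ :=
      le_trans (hLip _ _) (mul_le_mul_of_nonneg_left hee hL.le)
    have hre : w t x y * (g y * F (extFn Om S₁ t y)) - w t x y * (g y * F (extFn Om S₂ t y))
        = w t x y * (g y * (F (extFn Om S₁ t y) - F (extFn Om S₂ t y))) := by ring
    rw [hre, abs_mul, abs_mul, abs_of_nonneg hg0]
    calc |w t x y| * (g y * |F (extFn Om S₁ t y) - F (extFn Om S₂ t y)|)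
        ≤ wbd * (g y * (L * dist S₁ S₂)) :=
          mul_le_mul (hwbd t ht x hx y hy) (mul_le_mul_of_nonneg_left hFe hg0)
            (mul_nonneg hg0 (abs_nonneg _)) hwbd0
      _ = (wbd * L * dist S₁ S₂) * g y := by ring
  have hK1 : ((wbd * L).toNNReal : ℝ) = wbd * L :=
    Real.coe_toNNReal _ (mul_nonneg hwbd0 hL.le)
  have hcontr : ContractingWith (wbd * L).toNNReal T := by
    constructor
    · rw [← NNReal.coe_lt_coe, hK1, NNReal.coe_one]; exact hwL
    · refine LipschitzWith.of_dist_le_mul (fun S₁ S₂ => ?_)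
      rw [hK1]
      refine (BoundedContinuousFunction.dist_le ?_).2 (fun p => hdist S₁ S₂ p)
      exact mul_nonneg (mul_nonneg hwbd0 hL.le) dist_nonneg
  set Sfix := ContractingWith.fixedPoint T hcontr with hSfix
  have hfix : T Sfix = Sfix := hcontr.fixedPoint_isFixedPt
  refine ⟨extFn Om Sfix, ⟨extFn_contOn Sfix, ‖Sfix‖, fun t ht x hx => ?_⟩, ?_, ?_⟩
  · rw [extFn_eq Sfix ⟨ht, hx⟩, ← Real.norm_eq_abs]
    exact Sfix.norm_coe_le_norm _
  · intro t ht x hx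
    have hp : ((t, x) : ℝ × (Fin d → ℝ)) ∈ P := ⟨ht, hx⟩
    calc extFn Om Sfix t x = Sfix ⟨(t, x), hp⟩ := extFn_eq _ hp
      _ = T Sfix ⟨(t, x), hp⟩ := by rw [hfix]
      _ = Tfun Sfix t x := hTspec Sfix ⟨(t, x), hp⟩
      _ = (∫ y in Om, w t x y * (g y * F (extFn Om Sfix t y))) + I t x := by
          simp only [hTfun]
  · intro Sb' hSb' heq' t ht x hx
    obtain ⟨hSb'_cont, C', hC'⟩ := hSb'
    have hScont : Continuous (P.restrict fun q : ℝ × (Fin d → ℝ) => Sb' q.1 q.2) :=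
      continuousOn_iff_continuous_restrict.mp hSb'_cont
    set S' : ↥P →ᵇ ℝ := BoundedContinuousFunction.ofNormedAddCommGroup _ hScont C'
      (fun p => by rw [Real.norm_eq_abs]; exact hC' _ p.2.1 _ p.2.2) with hS'
    have hS'app : ∀ p : ↥P, S' p = Sb' (p : ℝ × (Fin d → ℝ)).1 (p : ℝ × (Fin d → ℝ)).2 :=
      fun p => rfl
    have hS'ext : ∀ t₁ ≥ (0:ℝ), ∀ y ∈ Om, extFn Om S' t₁ y = Sb' t₁ y := by
      intro t₁ ht₁ y hy
      rw [extFn_eq S' ⟨ht₁, hy⟩, hS'app]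
    have hfix' : T S' = S' := by
      ext p
      obtain ⟨hpt, hpx⟩ := p.2
      rw [hTspec]
      have h1 : Tfun S' (p : ℝ × (Fin d → ℝ)).1 (p : ℝ × (Fin d → ℝ)).2
          = (∫ y in Om, w (p : ℝ × (Fin d → ℝ)).1 (p : ℝ × (Fin d → ℝ)).2 y
              * (g y * F (Sb' (p : ℝ × (Fin d → ℝ)).1 y)))
            + I (p : ℝ × (Fin d → ℝ)).1 (p : ℝ × (Fin d → ℝ)).2 := by
        simp only [hTfun]
        congr 1
        refine setIntegral_congr_fun hOm_open.measurableSet (fun y hy => ?_)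
        rw [hS'ext _ hpt y hy]
      rw [h1, ← heq' _ hpt _ hpx, hS'app]
    have hSS : S' = Sfix := hcontr.fixedPoint_unique' hfix' hcontr.fixedPoint_isFixedPt
    have hp : ((t, x) : ℝ × (Fin d → ℝ)) ∈ P := ⟨ht, hx⟩
    calc Sb' t x = S' ⟨(t, x), hp⟩ := (hS'app ⟨(t, x), hp⟩).symm
      _ = Sfix ⟨(t, x), hp⟩ := by rw [hSS]
      _ = extFn Om Sfix t x := (extFn_eq _ hp).symm
theorem part2
    (d : ℕ) (Om : Set (Fin d → ℝ)) (hOm_open : IsOpen Om) (hOm_bdd : Bornology.IsBounded Om)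
    (g : (Fin d → ℝ) → ℝ)
    (hg_cont : ContinuousOn g Om) (hg_nonneg : ∀ x ∈ Om, 0 ≤ g x)
    (hg_bdd : ∃ C : ℝ, ∀ x ∈ Om, g x ≤ C) (hg_mass : (∫ x in Om, g x) = 1)
    (F : ℝ → ℝ) (M L : ℝ) (hM : 0 < M) (hL : 0 < L)
    (hF_bdd : ∀ u : ℝ, |F u| ≤ M) (hF_lip : LipschitzWith L.toNNReal F)
    (w₁ w₂ : ℝ → (Fin d → ℝ) → (Fin d → ℝ) → ℝ) (wbd₁ wbd₂ : ℝ)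
    (I : ℝ → (Fin d → ℝ) → ℝ)
    (S₁ S₂ : ℝ → (Fin d → ℝ) → ℝ)
    (hw₁ : CbTimeOn2 Om w₁) (hw₂ : CbTimeOn2 Om w₂)
    (hwbd₁ : ∀ t ≥ (0:ℝ), ∀ x ∈ Om, ∀ y ∈ Om, |w₁ t x y| ≤ wbd₁)
    (hwbd₂ : ∀ t ≥ (0:ℝ), ∀ x ∈ Om, ∀ y ∈ Om, |w₂ t x y| ≤ wbd₂)
    (hwL₁ : wbd₁ * L < 1) (hwL₂ : wbd₂ * L < 1)
    (hS₁ : CbTimeOn Om S₁) (hS₂ : CbTimeOn Om S₂)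
    (heq₁ : ∀ t ≥ (0:ℝ), ∀ x ∈ Om,
      S₁ t x = (∫ y in Om, w₁ t x y * (g y * F (S₁ t y))) + I t x)
    (heq₂ : ∀ t ≥ (0:ℝ), ∀ x ∈ Om,
      S₂ t x = (∫ y in Om, w₂ t x y * (g y * F (S₂ t y))) + I t x)
    (Dw : ℝ) (hDw : ∀ t ≥ (0:ℝ), ∀ x ∈ Om, ∀ y ∈ Om, |w₁ t x y - w₂ t x y| ≤ Dw) :
    ∀ t ≥ (0:ℝ), ∀ x ∈ Om, |S₁ t x - S₂ t x| ≤ (M / (1 - wbd₂ * L)) * Dw := by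
  obtain ⟨hw₁c, -⟩ := hw₁
  obtain ⟨hw₂c, -⟩ := hw₂
  obtain ⟨hS₁c, C₁, hC₁⟩ := hS₁
  obtain ⟨hS₂c, C₂, hC₂⟩ := hS₂
  obtain ⟨Cg, hCg⟩ := hg_bdd
  have hF_cont : Continuous F := hF_lip.continuous
  have hOm_ne : Om.Nonempty := by
    by_contra h
    rw [Set.not_nonempty_iff_eq_empty] at h
    rw [h] at hg_mass
    simp at hg_mass
  obtain ⟨x₀, hx₀⟩ := hOm_ne
  have hwbd₂0 : 0 ≤ wbd₂ := le_trans (abs_nonneg _) (hwbd₂ 0 le_rfl x₀ hx₀ x₀ hx₀)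
  have hDw0 : 0 ≤ Dw := le_trans (abs_nonneg _) (hDw 0 le_rfl x₀ hx₀ x₀ hx₀)
  have hg_abs : ∀ y ∈ Om, |g y| ≤ Cg := fun y hy => by
    rw [abs_of_nonneg (hg_nonneg y hy)]; exact hCg y hy
  have hg_int : IntegrableOn g Om := aux_integrableOn hOm_open hOm_bdd hg_cont hg_abs
  have hLip : ∀ a b : ℝ, |F a - F b| ≤ L * |a - b| := by
    intro a b
    have h := hF_lip.dist_le_mul a b
    rwa [Real.dist_eq, Real.dist_eq, Real.coe_toNNReal _ hL.le] at h
  -- sup of the difference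
  set A : Set ℝ := (fun p : ℝ × (Fin d → ℝ) => |S₁ p.1 p.2 - S₂ p.1 p.2|) ''
    (Set.Ici (0:ℝ) ×ˢ Om) with hA
  have hA_ne : A.Nonempty := ⟨_, ⟨(0, x₀), ⟨Set.self_mem_Ici, hx₀⟩, rfl⟩⟩
  have hA_bdd : BddAbove A := by
    refine ⟨C₁ + C₂, fun r hr => ?_⟩
    obtain ⟨p, hp, rfl⟩ := hr
    calc |S₁ p.1 p.2 - S₂ p.1 p.2| ≤ |S₁ p.1 p.2| + |S₂ p.1 p.2| := abs_sub _ _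
      _ ≤ C₁ + C₂ := add_le_add (hC₁ _ hp.1 _ hp.2) (hC₂ _ hp.1 _ hp.2)
  set K := sSup A with hK
  have hKmem : ∀ t ≥ (0:ℝ), ∀ x ∈ Om, |S₁ t x - S₂ t x| ≤ K :=
    fun t ht x hx => le_csSup hA_bdd ⟨(t, x), ⟨ht, hx⟩, rfl⟩
  have hK0 : 0 ≤ K := le_trans (abs_nonneg _) (hKmem 0 le_rfl x₀ hx₀)
  -- main estimate
  have hmain : ∀ t ≥ (0:ℝ), ∀ x ∈ Om, |S₁ t x - S₂ t x| ≤ M * Dw + wbd₂ * L * K := by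
    intro t ht x hx
    have hint₁ : IntegrableOn (fun y => w₁ t x y * (g y * F (S₁ t y))) Om :=
      aux_int3 hOm_open hOm_bdd (aux_sliceW hw₁c ht hx) hg_cont
        (hF_cont.comp_continuousOn (aux_sliceS hS₁c ht))
        (fun y hy => hwbd₁ t ht x hx y hy) hg_abs (fun y _ => hF_bdd _)
    have hint₂ : IntegrableOn (fun y => w₂ t x y * (g y * F (S₂ t y))) Om :=
      aux_int3 hOm_open hOm_bdd (aux_sliceW hw₂c ht hx) hg_cont
        (hF_cont.comp_continuousOn (aux_sliceS hS₂c ht))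
        (fun y hy => hwbd₂ t ht x hx y hy) hg_abs (fun y _ => hF_bdd _)
    have hdiff : S₁ t x - S₂ t x
        = ∫ y in Om, (w₁ t x y * (g y * F (S₁ t y)) - w₂ t x y * (g y * F (S₂ t y))) := by
      rw [heq₁ t ht x hx, heq₂ t ht x hx, add_sub_add_right_eq_sub,
        ← integral_sub hint₁ hint₂]
    rw [hdiff]
    refine aux_abs_setIntegral_le hOm_open hg_int hg_mass (fun y hy => ?_)
    have hg0 := hg_nonneg y hy
    have h1 : |w₁ t x y - w₂ t x y| ≤ Dw := hDw t ht x hx y hy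
    have h2 : |F (S₁ t y)| ≤ M := hF_bdd _
    have h3 : |w₂ t x y| ≤ wbd₂ := hwbd₂ t ht x hx y hy
    have h4 : |F (S₁ t y) - F (S₂ t y)| ≤ L * K :=
      le_trans (hLip _ _) (mul_le_mul_of_nonneg_left (hKmem t ht y hy) hL.le)
    have hre : w₁ t x y * (g y * F (S₁ t y)) - w₂ t x y * (g y * F (S₂ t y))
        = (w₁ t x y - w₂ t x y) * (g y * F (S₁ t y))
          + w₂ t x y * (g y * (F (S₁ t y) - F (S₂ t y))) := by ring
    rw [hre]
    calc |(w₁ t x y - w₂ t x y) * (g y * F (S₁ t y))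
          + w₂ t x y * (g y * (F (S₁ t y) - F (S₂ t y)))|
        ≤ |(w₁ t x y - w₂ t x y) * (g y * F (S₁ t y))|
          + |w₂ t x y * (g y * (F (S₁ t y) - F (S₂ t y)))| := abs_add_le _ _
      _ ≤ Dw * (g y * M) + wbd₂ * (g y * (L * K)) := by
          rw [abs_mul, abs_mul, abs_mul, abs_mul, abs_of_nonneg hg0]
          refine add_le_add
            (mul_le_mul h1 (mul_le_mul_of_nonneg_left h2 hg0)
              (mul_nonneg hg0 (abs_nonneg _)) hDw0)
            (mul_le_mul h3 (mul_le_mul_of_nonneg_left h4 hg0)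
              (mul_nonneg hg0 (abs_nonneg _)) hwbd₂0)
      _ = (M * Dw + wbd₂ * L * K) * g y := by ring
  have hKle : K ≤ M * Dw + wbd₂ * L * K := by
    refine csSup_le hA_ne ?_
    rintro r ⟨p, hp, rfl⟩
    exact hmain p.1 hp.1 p.2 hp.2
  have hc : 0 < 1 - wbd₂ * L := by linarith
  have hKfin : K ≤ (M / (1 - wbd₂ * L)) * Dw := by
    rw [div_mul_eq_mul_div, le_div_iff₀ hc]
    nlinarith
  intro t ht x hx
  exact le_trans (hKmem t ht x hx) hKfin

/-- In the slow-learning limit, for each connectivity kernel `w` with `‖w‖_∞ L < 1`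
the instantaneous-equilibrium equation `S = T_w[S]` has a unique solution
`S̄[w] ∈ C_b([0,∞)×Ω)`, and `w ↦ S̄[w]` is locally Lipschitz. -/
theorem statement17
    (d : ℕ) (Om : Set (Fin d → ℝ)) (hOm_open : IsOpen Om) (hOm_bdd : Bornology.IsBounded Om)
    (g : (Fin d → ℝ) → ℝ)
    (hg_cont : ContinuousOn g Om) (hg_nonneg : ∀ x ∈ Om, 0 ≤ g x)
    (hg_bdd : ∃ C : ℝ, ∀ x ∈ Om, g x ≤ C) (hg_mass : (∫ x in Om, g x) = 1)
    (I : ℝ → (Fin d → ℝ) → ℝ) (hI : CbTimeOn Om I)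
    (F : ℝ → ℝ) (M L : ℝ) (hM : 0 < M) (hL : 0 < L)
    (hF_bdd : ∀ u : ℝ, |F u| ≤ M) (hF_lip : LipschitzWith L.toNNReal F) :
    (∀ (w : ℝ → (Fin d → ℝ) → (Fin d → ℝ) → ℝ) (wbd : ℝ),
      CbTimeOn2 Om w → (∀ t ≥ (0:ℝ), ∀ x ∈ Om, ∀ y ∈ Om, |w t x y| ≤ wbd) →
      wbd * L < 1 →
      ∃ Sb : ℝ → (Fin d → ℝ) → ℝ, CbTimeOn Om Sb ∧
        (∀ t ≥ (0:ℝ), ∀ x ∈ Om,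
          Sb t x = (∫ y in Om, w t x y * (g y * F (Sb t y))) + I t x) ∧
        (∀ Sb' : ℝ → (Fin d → ℝ) → ℝ, CbTimeOn Om Sb' →
          (∀ t ≥ (0:ℝ), ∀ x ∈ Om,
            Sb' t x = (∫ y in Om, w t x y * (g y * F (Sb' t y))) + I t x) →
          ∀ t ≥ (0:ℝ), ∀ x ∈ Om, Sb' t x = Sb t x)) ∧
    (∀ (w₁ w₂ : ℝ → (Fin d → ℝ) → (Fin d → ℝ) → ℝ) (wbd₁ wbd₂ : ℝ)
      (S₁ S₂ : ℝ → (Fin d → ℝ) → ℝ),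
      CbTimeOn2 Om w₁ → CbTimeOn2 Om w₂ →
      (∀ t ≥ (0:ℝ), ∀ x ∈ Om, ∀ y ∈ Om, |w₁ t x y| ≤ wbd₁) →
      (∀ t ≥ (0:ℝ), ∀ x ∈ Om, ∀ y ∈ Om, |w₂ t x y| ≤ wbd₂) →
      wbd₁ * L < 1 → wbd₂ * L < 1 →
      CbTimeOn Om S₁ → CbTimeOn Om S₂ →
      (∀ t ≥ (0:ℝ), ∀ x ∈ Om,
        S₁ t x = (∫ y in Om, w₁ t x y * (g y * F (S₁ t y))) + I t x) →
      (∀ t ≥ (0:ℝ), ∀ x ∈ Om,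
        S₂ t x = (∫ y in Om, w₂ t x y * (g y * F (S₂ t y))) + I t x) →
      ∀ Dw : ℝ, (∀ t ≥ (0:ℝ), ∀ x ∈ Om, ∀ y ∈ Om, |w₁ t x y - w₂ t x y| ≤ Dw) →
      ∀ t ≥ (0:ℝ), ∀ x ∈ Om,
        |S₁ t x - S₂ t x| ≤ (M / (1 - wbd₂ * L)) * Dw) := by
  constructor
  · intro w wbd hw hwbd hwL
    exact part1 d Om hOm_open hOm_bdd g hg_cont hg_nonneg hg_bdd hg_mass I hI F M L hM hL
      hF_bdd hF_lip w wbd hw hwbd hwL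
  · intro w₁ w₂ wbd₁ wbd₂ S₁ S₂ hw₁ hw₂ hb₁ hb₂ hL₁ hL₂ hS₁ hS₂ he₁ he₂ Dw hDw
    exact part2 d Om hOm_open hOm_bdd g hg_cont hg_nonneg hg_bdd hg_mass F M L hM hL
      hF_bdd hF_lip w₁ w₂ wbd₁ wbd₂ I S₁ S₂ hw₁ hw₂ hb₁ hb₂ hL₁ hL₂ hS₁ hS₂ he₁ he₂ Dw hDw
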